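/- Let f : ℍ → ℍ be H-differentiable at z⁰ ∈ ℍ with H-derivative d₁ and φ : ℍ → ℍ be H-differentiable at z⁰ with H-derivative d₂, with φ(z) ≠ 0 for all z in some neighborhood of z⁰. Then the function z ↦ f(z) · (φ(z))⁻¹ is H-differentiable at z⁰ with H-derivative d₁ · (φ(z⁰))⁻¹ − f(z⁰) · (φ(z⁰))⁻¹ · d₂ · (φ(z⁰))⁻¹. -/

import Mathlib

open scoped Quaternion
open Filter Topology

/-- A function `f : ℍ → ℍ` is H-differentiable at `z₀` with H-derivative `d` if there exist
sequences of quaternions `A, B` with `∑ ‖A k‖ * ‖B k‖ < ∞` such that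
`f (z₀ + h) - f z₀ = ∑' k, A k * h * B k + ω h` with `‖ω h‖ / ‖h‖ → 0` as `h → 0`,
and `d = ∑' k, A k * B k`. -/
def HDiffAt (f : ℍ[ℝ] → ℍ[ℝ]) (z₀ d : ℍ[ℝ]) : Prop :=
  ∃ A B : ℕ → ℍ[ℝ],
    (Summable fun k => ‖A k‖ * ‖B k‖) ∧
    Filter.Tendsto
      (fun h : ℍ[ℝ] => ‖f (z₀ + h) - f z₀ - ∑' k, A k * h * B k‖ / ‖h‖)
      (𝓝[≠] (0 : ℍ[ℝ])) (𝓝 0) ∧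
    d = ∑' k, A k * B k

section Helpers
open ContinuousLinearMap

private lemma summable_prod3 {A B : ℕ → ℍ[ℝ]} (hs : Summable fun k => ‖A k‖ * ‖B k‖)
    (h : ℍ[ℝ]) : Summable fun k => A k * h * B k :=
  Summable.of_norm <| (hs.mul_right ‖h‖).congr fun k => by rw [norm_mul, norm_mul]; ring

private lemma summable_prod2 {A B : ℕ → ℍ[ℝ]} (hs : Summable fun k => ‖A k‖ * ‖B k‖) :
    Summable fun k => A k * B k :=
  Summable.of_norm <| hs.congr fun k => (norm_mul _ _).symm

private lemma summable_mlr {A B : ℕ → ℍ[ℝ]} (hs : Summable fun k => ‖A k‖ * ‖B k‖) :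
    Summable fun k => ContinuousLinearMap.mulLeftRight ℝ ℍ[ℝ] (A k) (B k) :=
  Summable.of_norm <| Summable.of_nonneg_of_le (fun _ => norm_nonneg _)
    (fun k => ContinuousLinearMap.opNorm_mulLeftRight_apply_apply_le ℝ ℍ[ℝ] (A k) (B k)) hs

private lemma mlr_tsum_apply {A B : ℕ → ℍ[ℝ]} (hs : Summable fun k => ‖A k‖ * ‖B k‖)
    (h : ℍ[ℝ]) :
    (∑' k, ContinuousLinearMap.mulLeftRight ℝ ℍ[ℝ] (A k) (B k)) h = ∑' k, A k * h * B k := by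
  have := (ContinuousLinearMap.apply ℝ ℍ[ℝ] h).map_tsum (summable_mlr hs)
  simpa [ContinuousLinearMap.mulLeftRight_apply] using this

private lemma hasFDerivAt_of_hdiff {f : ℍ[ℝ] → ℍ[ℝ]} {z₀ : ℍ[ℝ]} {A B : ℕ → ℍ[ℝ]}
    (hs : Summable fun k => ‖A k‖ * ‖B k‖)
    (ht : Tendsto (fun h : ℍ[ℝ] => ‖f (z₀ + h) - f z₀ - ∑' k, A k * h * B k‖ / ‖h‖)
      (𝓝[≠] (0 : ℍ[ℝ])) (𝓝 0)) :
    HasFDerivAt f (∑' k, ContinuousLinearMap.mulLeftRight ℝ ℍ[ℝ] (A k) (B k)) z₀ := by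
  set g : ℍ[ℝ] → ℝ := fun h => ‖f (z₀ + h) - f z₀ - ∑' k, A k * h * B k‖ / ‖h‖ with hg
  have hg0 : g 0 = 0 := by simp [hg]
  have ht' : Tendsto g (𝓝 (0 : ℍ[ℝ])) (𝓝 0) := by
    rw [← nhdsNE_sup_pure (0 : ℍ[ℝ]), tendsto_sup]
    exact ⟨ht, by rw [tendsto_pure_left]; intro s hs'; simpa [hg0] using mem_of_mem_nhds hs'⟩
  rw [hasFDerivAt_iff_tendsto]
  have hsub : Tendsto (fun x' : ℍ[ℝ] => x' - z₀) (𝓝 z₀) (𝓝 0) := by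
    simpa using ((tendsto_id.sub tendsto_const_nhds) :
      Tendsto (fun x' : ℍ[ℝ] => x' - z₀) (𝓝 z₀) (𝓝 (z₀ - z₀)))
  refine (ht'.comp hsub).congr fun x' => ?_
  simp only [Function.comp, hg, add_sub_cancel]
  rw [mlr_tsum_apply hs, div_eq_inv_mul]

private lemma hdiff_tendsto_of_hasFDerivAt {f : ℍ[ℝ] → ℍ[ℝ]} {z₀ : ℍ[ℝ]} {A B : ℕ → ℍ[ℝ]}
    (hs : Summable fun k => ‖A k‖ * ‖B k‖)
    (hF : HasFDerivAt f (∑' k, ContinuousLinearMap.mulLeftRight ℝ ℍ[ℝ] (A k) (B k)) z₀) :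
    Tendsto (fun h : ℍ[ℝ] => ‖f (z₀ + h) - f z₀ - ∑' k, A k * h * B k‖ / ‖h‖)
      (𝓝[≠] (0 : ℍ[ℝ])) (𝓝 0) := by
  rw [hasFDerivAt_iff_tendsto] at hF
  have hadd : Tendsto (fun h : ℍ[ℝ] => z₀ + h) (𝓝 0) (𝓝 z₀) := by
    simpa using ((tendsto_const_nhds.add tendsto_id) :
      Tendsto (fun h : ℍ[ℝ] => z₀ + h) (𝓝 0) (𝓝 (z₀ + 0)))
  have := (hF.comp hadd).mono_left (nhdsWithin_le_nhds (s := {(0 : ℍ[ℝ])}ᶜ))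
  refine this.congr fun h => ?_
  simp only [Function.comp, add_sub_cancel_left]
  rw [mlr_tsum_apply hs, div_eq_inv_mul]

/-- Interleaving of two sequences. -/
private def il (x y : ℕ → ℍ[ℝ]) : ℕ → ℍ[ℝ] := fun k => if Even k then x (k / 2) else y (k / 2)

private lemma il_even (x y : ℕ → ℍ[ℝ]) (k : ℕ) : il x y (2 * k) = x k := by
  have : (2 * k) / 2 = k := by omega
  simp [il, this, even_two_mul]

private lemma il_odd (x y : ℕ → ℍ[ℝ]) (k : ℕ) : il x y (2 * k + 1) = y k := by
  have h1 : ¬ Even (2 * k + 1) := by simp [parity_simps]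
  have h2 : (2 * k + 1) / 2 = k := by omega
  simp [il, h1, h2]

private lemma il_summable {x₁ y₁ x₂ y₂ : ℕ → ℍ[ℝ]}
    (h₁ : Summable fun k => ‖x₁ k‖ * ‖y₁ k‖) (h₂ : Summable fun k => ‖x₂ k‖ * ‖y₂ k‖) :
    Summable fun k => ‖il x₁ x₂ k‖ * ‖il y₁ y₂ k‖ := by
  apply Summable.even_add_odd
  · exact h₁.congr fun k => by rw [il_even, il_even]
  · exact h₂.congr fun k => by rw [il_odd, il_odd]

private lemma il_tsum3 {x₁ y₁ x₂ y₂ : ℕ → ℍ[ℝ]}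
    (h₁ : Summable fun k => ‖x₁ k‖ * ‖y₁ k‖) (h₂ : Summable fun k => ‖x₂ k‖ * ‖y₂ k‖)
    (h : ℍ[ℝ]) :
    ∑' k, il x₁ x₂ k * h * il y₁ y₂ k =
      (∑' k, x₁ k * h * y₁ k) + ∑' k, x₂ k * h * y₂ k := by
  have hse : Summable fun k => il x₁ x₂ (2 * k) * h * il y₁ y₂ (2 * k) :=
    (summable_prod3 h₁ h).congr fun k => by rw [il_even, il_even]
  have hso : Summable fun k => il x₁ x₂ (2 * k + 1) * h * il y₁ y₂ (2 * k + 1) :=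
    (summable_prod3 h₂ h).congr fun k => by rw [il_odd, il_odd]
  rw [← tsum_even_add_odd (f := fun k => il x₁ x₂ k * h * il y₁ y₂ k) hse hso]
  congr 1
  · exact tsum_congr fun k => by rw [il_even, il_even]
  · exact tsum_congr fun k => by rw [il_odd, il_odd]

private lemma il_tsum2 {x₁ y₁ x₂ y₂ : ℕ → ℍ[ℝ]}
    (h₁ : Summable fun k => ‖x₁ k‖ * ‖y₁ k‖) (h₂ : Summable fun k => ‖x₂ k‖ * ‖y₂ k‖) :
    ∑' k, il x₁ x₂ k * il y₁ y₂ k = (∑' k, x₁ k * y₁ k) + ∑' k, x₂ k * y₂ k := by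
  have hse : Summable fun k => il x₁ x₂ (2 * k) * il y₁ y₂ (2 * k) :=
    (summable_prod2 h₁).congr fun k => by rw [il_even, il_even]
  have hso : Summable fun k => il x₁ x₂ (2 * k + 1) * il y₁ y₂ (2 * k + 1) :=
    (summable_prod2 h₂).congr fun k => by rw [il_odd, il_odd]
  rw [← tsum_even_add_odd (f := fun k => il x₁ x₂ k * il y₁ y₂ k) hse hso]
  congr 1
  · exact tsum_congr fun k => by rw [il_even, il_even]
  · exact tsum_congr fun k => by rw [il_odd, il_odd]

private lemma tsum_right_const (x y : ℕ → ℍ[ℝ]) (c h : ℍ[ℝ]) :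
    ∑' k, x k * h * (y k * c) = (∑' k, x k * h * y k) * c := by
  rw [← tsum_mul_right]
  exact tsum_congr fun k => (mul_assoc _ _ _).symm

private lemma tsum_left_right_const (x y : ℕ → ℍ[ℝ]) (a c h : ℍ[ℝ]) :
    ∑' k, -(a * x k) * h * (y k * c) = -(a * (∑' k, x k * h * y k) * c) := by
  have e : ∀ k, -(a * x k) * h * (y k * c) = -(a * ((x k * h * y k) * c)) := fun k => by
    noncomm_ring
  rw [tsum_congr e, tsum_neg, tsum_mul_left, tsum_mul_right]
  noncomm_ring

private lemma tsum_right_const2 (x y : ℕ → ℍ[ℝ]) (c : ℍ[ℝ]) :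
    ∑' k, x k * (y k * c) = (∑' k, x k * y k) * c := by
  rw [← tsum_mul_right]
  exact tsum_congr fun k => (mul_assoc _ _ _).symm

private lemma tsum_left_right_const2 (x y : ℕ → ℍ[ℝ]) (a c : ℍ[ℝ]) :
    ∑' k, -(a * x k) * (y k * c) = -(a * (∑' k, x k * y k) * c) := by
  have e : ∀ k, -(a * x k) * (y k * c) = -(a * ((x k * y k) * c)) := fun k => by
    noncomm_ring
  rw [tsum_congr e, tsum_neg, tsum_mul_left, tsum_mul_right]
  noncomm_ring

private lemma norm_summable_right {A B : ℕ → ℍ[ℝ]} (hs : Summable fun k => ‖A k‖ * ‖B k‖)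
    (c : ℍ[ℝ]) : Summable fun k => ‖A k‖ * ‖B k * c‖ :=
  (hs.mul_right ‖c‖).congr fun k => by rw [norm_mul]; ring

private lemma norm_summable_both {A B : ℕ → ℍ[ℝ]} (hs : Summable fun k => ‖A k‖ * ‖B k‖)
    (a c : ℍ[ℝ]) : Summable fun k => ‖-(a * A k)‖ * ‖B k * c‖ :=
  (((hs.mul_left ‖a‖).mul_right ‖c‖)).congr fun k => by
    rw [norm_neg, norm_mul, norm_mul]; ring

end Helpers
private lemma deriv_value {A₁ B₁ A₂ B₂ : ℕ → ℍ[ℝ]} (a c : ℍ[ℝ])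
    (hs₁ : Summable fun k => ‖A₁ k‖ * ‖B₁ k‖) (hs₂ : Summable fun k => ‖A₂ k‖ * ‖B₂ k‖) :
    (∑' k, A₁ k * B₁ k) * c - a * c * (∑' k, A₂ k * B₂ k) * c =
      ∑' k, il A₁ (fun k => -(a * c * A₂ k)) k *
        il (fun k => B₁ k * c) (fun k => B₂ k * c) k := by
  rw [il_tsum2 (norm_summable_right hs₁ c) (norm_summable_both hs₂ (a * c) c),
    tsum_right_const2, tsum_left_right_const2]
  noncomm_ring

private lemma clm_eq {A₁ B₁ A₂ B₂ : ℕ → ℍ[ℝ]} (b c : ℍ[ℝ])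
    (hs₁ : Summable fun k => ‖A₁ k‖ * ‖B₁ k‖) (hs₂ : Summable fun k => ‖A₂ k‖ * ‖B₂ k‖) :
    (∑' k, ContinuousLinearMap.mulLeftRight ℝ ℍ[ℝ]
        (il A₁ (fun k => -(b * c * A₂ k)) k)
        (il (fun k => B₁ k * c) (fun k => B₂ k * c) k)) =
      b • (-ContinuousLinearMap.mulLeftRight ℝ ℍ[ℝ] c c).comp
          (∑' k, ContinuousLinearMap.mulLeftRight ℝ ℍ[ℝ] (A₂ k) (B₂ k)) +
        (∑' k, ContinuousLinearMap.mulLeftRight ℝ ℍ[ℝ] (A₁ k) (B₁ k)).smulRight c := by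
  refine ContinuousLinearMap.ext fun h => ?_
  rw [mlr_tsum_apply (il_summable (norm_summable_right hs₁ c) (norm_summable_both hs₂ (b*c) c)) h,
    il_tsum3 (norm_summable_right hs₁ c) (norm_summable_both hs₂ (b*c) c) h,
    tsum_right_const, tsum_left_right_const,
    ← mlr_tsum_apply hs₁ h, ← mlr_tsum_apply hs₂ h]
  simp only [ContinuousLinearMap.add_apply, ContinuousLinearMap.coe_smul',
    Pi.smul_apply, ContinuousLinearMap.coe_comp', Function.comp_apply,
    ContinuousLinearMap.neg_apply, ContinuousLinearMap.mulLeftRight_apply,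
    ContinuousLinearMap.smulRight_apply, smul_eq_mul]
  noncomm_ring

set_option maxHeartbeats 1000000 in
/-- Right-quotient rule for H-derivatives. -/
theorem hDiffAt_mul_inv (f φ : ℍ[ℝ] → ℍ[ℝ]) (z₀ d₁ d₂ : ℍ[ℝ])
    (hf : HDiffAt f z₀ d₁) (hφ : HDiffAt φ z₀ d₂) (hne : ∀ᶠ z in 𝓝 z₀, φ z ≠ 0) :
    HDiffAt (fun z => f z * (φ z)⁻¹) z₀
      (d₁ * (φ z₀)⁻¹ - f z₀ * (φ z₀)⁻¹ * d₂ * (φ z₀)⁻¹) := by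
  obtain ⟨A₁, B₁, hs₁, ht₁, hd₁⟩ := hf
  obtain ⟨A₂, B₂, hs₂, ht₂, hd₂⟩ := hφ
  have hφ0 : φ z₀ ≠ 0 := hne.self_of_nhds
  refine ⟨il A₁ (fun k => -(f z₀ * (φ z₀)⁻¹ * A₂ k)),
      il (fun k => B₁ k * (φ z₀)⁻¹) (fun k => B₂ k * (φ z₀)⁻¹),
      il_summable (norm_summable_right hs₁ ((φ z₀)⁻¹))
        (norm_summable_both hs₂ (f z₀ * (φ z₀)⁻¹) ((φ z₀)⁻¹)), ?_, ?_⟩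
  · refine hdiff_tendsto_of_hasFDerivAt (f := fun z => f z * (φ z)⁻¹) (z₀ := z₀)
      (il_summable (norm_summable_right hs₁ ((φ z₀)⁻¹))
        (norm_summable_both hs₂ (f z₀ * (φ z₀)⁻¹) ((φ z₀)⁻¹))) ?_
    rw [clm_eq (f z₀) ((φ z₀)⁻¹) hs₁ hs₂]
    exact (hasFDerivAt_of_hdiff hs₁ ht₁).mul'
      ((hasFDerivAt_inv' hφ0).comp z₀ (hasFDerivAt_of_hdiff hs₂ ht₂))
  · rw [hd₁, hd₂]
    exact deriv_value (f z₀) ((φ z₀)⁻¹) hs₁ hs₂
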